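/- Both t₁ and t₂ are maximal tori of h₁: each is an abelian Lie subalgebra of Der(h₁) all of whose elements are semisimple linear endomorphisms of h₁, and neither is properly contained in another such subalgebra. -/
import Mathlib

open Module

/-- An endomorphism is semisimple when every invariant subspace admits an invariant
complement. -/
def IsSemisimpleEnd {g : Type*} [AddCommGroup g] [Module ℝ g] (f : Module.End ℝ g) : Prop :=
  ∀ p : Submodule ℝ g, (∀ x ∈ p, f x ∈ p) →
    ∃ q : Submodule ℝ g, (∀ x ∈ q, f x ∈ q) ∧ IsCompl p q

/-- A torus of a real Lie algebra: an abelian Lie subalgebra of `Der g` (here presented as a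
subspace of endomorphisms consisting of pairwise commuting derivations) all of whose elements
are semisimple. -/
def IsTorus {g : Type*} [LieRing g] [LieAlgebra ℝ g]
    (t : Submodule ℝ (Module.End ℝ g)) : Prop :=
  (∀ f ∈ t, ∀ x y : g, f ⁅x, y⁆ = ⁅f x, y⁆ + ⁅x, f y⁆) ∧
  (∀ f ∈ t, ∀ f' ∈ t, f * f' = f' * f) ∧
  (∀ f ∈ t, IsSemisimpleEnd f)

/-- A maximal torus is a torus not properly contained in any other torus. -/
def IsMaximalTorus {g : Type*} [LieRing g] [LieAlgebra ℝ g]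
    (t : Submodule ℝ (Module.End ℝ g)) : Prop :=
  IsTorus t ∧ ∀ t' : Submodule ℝ (Module.End ℝ g), IsTorus t' → t ≤ t' → t' = t

/- ------------------------------------------------------------------ -/
/- Auxiliary lemmas                                                    -/
/- ------------------------------------------------------------------ -/

section Aux

open Polynomial

/-- Bridge from Mathlib's notion of semisimple endomorphism to ours. -/
lemma isSemisimpleEnd_of_isSemisimple {g : Type*} [AddCommGroup g] [Module ℝ g]
    {f : Module.End ℝ g} (h : f.IsSemisimple) : IsSemisimpleEnd f := by
  intro p hp
  obtain ⟨q, hq, hcompl⟩ := Module.End.isSemisimple_iff.mp h p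
    ((Module.End.mem_invtSubmodule f).mpr fun x hx => hp x hx)
  exact ⟨q, fun x hx => hq hx, hcompl⟩

lemma squarefree_poly1 : Squarefree ((X - C (0:ℝ)) * (X - C 1)) :=
  (separable_X_sub_C.mul separable_X_sub_C
    (Polynomial.isCoprime_X_sub_C_of_isUnit_sub (by norm_num))).squarefree

lemma squarefree_poly2 : Squarefree ((X - C (1:ℝ)) * (X - C 2)) :=
  (separable_X_sub_C.mul separable_X_sub_C
    (Polynomial.isCoprime_X_sub_C_of_isUnit_sub (by norm_num))).squarefree

lemma squarefree_poly3 : Squarefree ((X : ℝ[X]) * (X ^ 2 + 1)) := by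
  have hne : ((X : ℝ[X]) ^ 2 + 1) ≠ 0 := by
    intro h
    have := congrArg (eval 0) h
    simp at this
  have hdeg : ((X : ℝ[X]) ^ 2 + 1).natDegree = 2 := by compute_degree!
  have hirr : Irreducible ((X : ℝ[X]) ^ 2 + 1) := by
    rw [Polynomial.irreducible_iff_roots_eq_zero_of_degree_le_three (by omega) (by omega)]
    rw [Multiset.eq_zero_iff_forall_notMem]
    intro a ha
    rw [mem_roots hne] at ha
    simp [IsRoot] at ha
    nlinarith [sq_nonneg a]
  have hcop : IsCoprime ((X : ℝ[X])) ((X : ℝ[X]) ^ 2 + 1) := ⟨-X, 1, by ring⟩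
  rw [squarefree_mul_iff]
  exact ⟨hcop.isRelPrime, Polynomial.separable_X.squarefree, hirr.squarefree⟩

/-- The span of two commuting semisimple derivations is a torus. -/
lemma isTorus_span_pair {g : Type*} [LieRing g] [LieAlgebra ℝ g] [Module.Finite ℝ g]
    {A B : Module.End ℝ g}
    (hdA : ∀ x y : g, A ⁅x, y⁆ = ⁅A x, y⁆ + ⁅x, A y⁆)
    (hdB : ∀ x y : g, B ⁅x, y⁆ = ⁅B x, y⁆ + ⁅x, B y⁆)
    (hAB : A * B = B * A)
    (hsA : A.IsSemisimple) (hsB : B.IsSemisimple) :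
    IsTorus (Submodule.span ℝ {A, B}) := by
  refine ⟨?_, ?_, ?_⟩
  · intro f hf x y
    obtain ⟨a, c, rfl⟩ := Submodule.mem_span_pair.mp hf
    simp only [LinearMap.add_apply, LinearMap.smul_apply, hdA x y, hdB x y,
      smul_add, add_lie, lie_add, smul_lie, lie_smul]
    abel
  · intro f hf f' hf'
    obtain ⟨a, c, rfl⟩ := Submodule.mem_span_pair.mp hf
    obtain ⟨a', c', rfl⟩ := Submodule.mem_span_pair.mp hf'
    simp only [add_mul, mul_add, smul_mul_assoc, mul_smul_comm, smul_add, smul_smul,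
      hAB, mul_comm]
    abel
  · intro f hf
    obtain ⟨a, c, rfl⟩ := Submodule.mem_span_pair.mp hf
    refine isSemisimpleEnd_of_isSemisimple ?_
    have hA' : (a • A).IsSemisimple := Module.End.IsSemisimple_smul a hsA
    have hB' : (c • B).IsSemisimple := Module.End.IsSemisimple_smul c hsB
    have hcomm : Commute (a • A) (c • B) :=
      (Commute.smul_left (Commute.smul_right hAB c) a)
    exact Module.End.IsSemisimple.add_of_commute hcomm hA' hB'

end Aux

theorem t1_t2_maximal_tori {g : Type} [LieRing g] [LieAlgebra ℝ g] (b : Basis (Fin 3) ℝ g)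
    (h12 : ⁅b 0, b 1⁆ = b 2) (h13 : ⁅b 0, b 2⁆ = 0) (h23 : ⁅b 1, b 2⁆ = 0) :
    IsMaximalTorus (Submodule.span ℝ
        {b.constr ℝ ![b 0, 0, b 2], b.constr ℝ ![0, b 1, b 2]}) ∧
    IsMaximalTorus (Submodule.span ℝ
        {b.constr ℝ ![b 0, b 1, (2 : ℝ) • b 2], b.constr ℝ ![b 1, -b 0, 0]}) := by
  have : Module.Finite ℝ g := Module.Finite.of_basis b
  -- brackets of basis vectors in all orders
  have h21 : ⁅b 1, b 0⁆ = -b 2 := by rw [← lie_skew, h12]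
  have h31 : ⁅b 2, b 0⁆ = 0 := by rw [← lie_skew, h13, neg_zero]
  have h32 : ⁅b 2, b 1⁆ = 0 := by rw [← lie_skew, h23, neg_zero]
  have h11 : ⁅b 0, b 0⁆ = 0 := lie_self _
  have h22 : ⁅b 1, b 1⁆ = 0 := lie_self _
  have h33 : ⁅b 2, b 2⁆ = 0 := lie_self _
  -- general formula for constr applications
  have happ : ∀ (v : Fin 3 → g) (x : g), b.constr ℝ v x =
      b.repr x 0 • v 0 + b.repr x 1 • v 1 + b.repr x 2 • v 2 := by
    intro v x
    rw [Basis.constr_apply_fintype, Fin.sum_univ_three]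
    simp [Basis.equivFun_apply]
  have hrepr : ∀ x : g, x = b.repr x 0 • b 0 + b.repr x 1 • b 1 + b.repr x 2 • b 2 := by
    intro x
    conv_lhs => rw [← b.sum_repr x]
    rw [Fin.sum_univ_three]
  -- derivation property on basis elements implies it everywhere
  have hder : ∀ D : Module.End ℝ g,
      (∀ i j : Fin 3, D ⁅b i, b j⁆ = ⁅D (b i), b j⁆ + ⁅b i, D (b j)⁆) →
      ∀ x y : g, D ⁅x, y⁆ = ⁅D x, y⁆ + ⁅x, D y⁆ := by
    intro D h x y
    rw [hrepr x, hrepr y]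
    simp only [add_lie, lie_add, smul_lie, lie_smul, map_add, map_smul, h, smul_add]
    abel
  constructor
  · -- t₁
    set d1 := b.constr ℝ ![b 0, 0, b 2] with hd1
    set d2 := b.constr ℝ ![0, b 1, b 2] with hd2
    have hd1b0 : d1 (b 0) = b 0 := by rw [hd1, Basis.constr_basis]; rfl
    have hd1b1 : d1 (b 1) = 0 := by rw [hd1, Basis.constr_basis]; rfl
    have hd1b2 : d1 (b 2) = b 2 := by rw [hd1, Basis.constr_basis]; rfl
    have hd2b0 : d2 (b 0) = 0 := by rw [hd2, Basis.constr_basis]; rfl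
    have hd2b1 : d2 (b 1) = b 1 := by rw [hd2, Basis.constr_basis]; rfl
    have hd2b2 : d2 (b 2) = b 2 := by rw [hd2, Basis.constr_basis]; rfl
    have hderd1 : ∀ x y : g, d1 ⁅x, y⁆ = ⁅d1 x, y⁆ + ⁅x, d1 y⁆ := by
      apply hder
      intro i j
      fin_cases i <;> fin_cases j <;>
        simp [h11, h12, h13, h21, h22, h23, h31, h32, h33,
          hd1b0, hd1b1, hd1b2]
    have hderd2 : ∀ x y : g, d2 ⁅x, y⁆ = ⁅d2 x, y⁆ + ⁅x, d2 y⁆ := by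
      apply hder
      intro i j
      fin_cases i <;> fin_cases j <;>
        simp [h11, h12, h13, h21, h22, h23, h31, h32, h33,
          hd2b0, hd2b1, hd2b2]
    have hcomm12 : d1 * d2 = d2 * d1 := by
      apply b.ext
      intro i
      fin_cases i <;>
        simp [Module.End.mul_apply, hd1b0, hd1b1, hd1b2, hd2b0, hd2b1, hd2b2]
    have hs1 : Module.End.IsSemisimple d1 := by
      apply Module.End.isSemisimple_of_squarefree_aeval_eq_zero squarefree_poly1
      have : Polynomial.aeval d1 ((Polynomial.X - Polynomial.C (0:ℝ)) *
          (Polynomial.X - Polynomial.C 1)) = (d1 - 0) * (d1 - 1) := by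
        simp [map_mul]
      rw [this]
      apply b.ext
      intro i
      fin_cases i <;>
        simp [Module.End.mul_apply, hd1b0, hd1b1, hd1b2]
    have hs2 : Module.End.IsSemisimple d2 := by
      apply Module.End.isSemisimple_of_squarefree_aeval_eq_zero squarefree_poly1
      have : Polynomial.aeval d2 ((Polynomial.X - Polynomial.C (0:ℝ)) *
          (Polynomial.X - Polynomial.C 1)) = (d2 - 0) * (d2 - 1) := by
        simp [map_mul]
      rw [this]
      apply b.ext
      intro i
      fin_cases i <;>
        simp [Module.End.mul_apply, hd2b0, hd2b1, hd2b2]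
    refine ⟨isTorus_span_pair hderd1 hderd2 hcomm12 hs1 hs2, ?_⟩
    intro t' ht' hle
    refine le_antisymm ?_ hle
    intro f hf
    have hd1t : d1 ∈ t' := hle (Submodule.subset_span (Set.mem_insert _ _))
    have hd2t : d2 ∈ t' := hle (Submodule.subset_span (Set.mem_insert_of_mem _ rfl))
    have hc1 : f * d1 = d1 * f := ht'.2.1 f hf d1 hd1t
    have hc2 : f * d2 = d2 * f := ht'.2.1 f hf d2 hd2t
    have hdf : ∀ x y : g, f ⁅x, y⁆ = ⁅f x, y⁆ + ⁅x, f y⁆ := ht'.1 f hf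
    -- formulas for d1, d2 applied to arbitrary vectors
    have hd1x : ∀ x : g, d1 x = b.repr x 0 • b 0 + b.repr x 2 • b 2 := by
      intro x
      rw [hd1, happ]
      simp
    have hd2x : ∀ x : g, d2 x = b.repr x 1 • b 1 + b.repr x 2 • b 2 := by
      intro x
      rw [hd2, happ]
      simp
    -- f (b 0) = a • b 0
    have e10 : f (b 0) = d1 (f (b 0)) := by
      have := congrArg (fun h : Module.End ℝ g => h (b 0)) hc1
      simpa [Module.End.mul_apply, hd1b0] using this
    have e20 : d2 (f (b 0)) = 0 := by
      have := congrArg (fun h : Module.End ℝ g => h (b 0)) hc2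
      simpa [Module.End.mul_apply, hd2b0] using this.symm
    have c10 : b.repr (f (b 0)) 1 = 0 := by
      have h0 := e20
      rw [hd2x] at h0
      have := congrArg (fun z => b.repr z 1) h0
      simpa [Finsupp.single_apply] using this
    have c20 : b.repr (f (b 0)) 2 = 0 := by
      have h0 := e20
      rw [hd2x] at h0
      have := congrArg (fun z => b.repr z 2) h0
      simpa [Finsupp.single_apply] using this
    have hfb0 : f (b 0) = b.repr (f (b 0)) 0 • b 0 := by
      conv_lhs => rw [hrepr (f (b 0))]
      rw [c10, c20]
      simp
    -- f (b 1) = q • b 1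
    have e11 : d1 (f (b 1)) = 0 := by
      have := congrArg (fun h : Module.End ℝ g => h (b 1)) hc1
      simpa [Module.End.mul_apply, hd1b1] using this.symm
    have c01 : b.repr (f (b 1)) 0 = 0 := by
      have h0 := e11
      rw [hd1x] at h0
      have := congrArg (fun z => b.repr z 0) h0
      simpa [Finsupp.single_apply] using this
    have c21 : b.repr (f (b 1)) 2 = 0 := by
      have h0 := e11
      rw [hd1x] at h0
      have := congrArg (fun z => b.repr z 2) h0
      simpa [Finsupp.single_apply] using this
    have hfb1 : f (b 1) = b.repr (f (b 1)) 1 • b 1 := by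
      conv_lhs => rw [hrepr (f (b 1))]
      rw [c01, c21]
      simp
    obtain ⟨a, q, hfb0, hfb1⟩ : ∃ a q : ℝ, f (b 0) = a • b 0 ∧ f (b 1) = q • b 1 :=
      ⟨_, _, hfb0, hfb1⟩
    -- f (b 2) = (a + q) • b 2, by the derivation property
    have hfb2 : f (b 2) = a • b 2 + q • b 2 := by
      rw [← h12, hdf (b 0) (b 1), hfb0, hfb1, smul_lie, lie_smul, h12]
    apply Submodule.mem_span_pair.mpr
    refine ⟨a, q, ?_⟩
    apply b.ext
    intro i
    fin_cases i <;>
      simp [hd1b0, hd1b1, hd1b2, hd2b0, hd2b1, hd2b2, hfb0, hfb1, hfb2]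
  · -- t₂
    set e1 := b.constr ℝ ![b 0, b 1, (2:ℝ) • b 2] with he1
    set e2 := b.constr ℝ ![b 1, -b 0, 0] with he2
    have he1b0 : e1 (b 0) = b 0 := by rw [he1, Basis.constr_basis]; rfl
    have he1b1 : e1 (b 1) = b 1 := by rw [he1, Basis.constr_basis]; rfl
    have he1b2 : e1 (b 2) = (2:ℝ) • b 2 := by rw [he1, Basis.constr_basis]; rfl
    have he2b0 : e2 (b 0) = b 1 := by rw [he2, Basis.constr_basis]; rfl
    have he2b1 : e2 (b 1) = -b 0 := by rw [he2, Basis.constr_basis]; rfl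
    have he2b2 : e2 (b 2) = 0 := by rw [he2, Basis.constr_basis]; rfl
    have hdere1 : ∀ x y : g, e1 ⁅x, y⁆ = ⁅e1 x, y⁆ + ⁅x, e1 y⁆ := by
      apply hder
      intro i j
      fin_cases i <;> fin_cases j <;>
        simp [h11, h12, h13, h21, h22, h23, h31, h32, h33,
          he1b0, he1b1, he1b2, two_smul]
    have hdere2 : ∀ x y : g, e2 ⁅x, y⁆ = ⁅e2 x, y⁆ + ⁅x, e2 y⁆ := by
      apply hder
      intro i j
      fin_cases i <;> fin_cases j <;>
        simp [h11, h12, h13, h21, h22, h23, h31, h32, h33,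
          he2b0, he2b1, he2b2]
    have hcomm12 : e1 * e2 = e2 * e1 := by
      apply b.ext
      intro i
      fin_cases i <;>
        simp [Module.End.mul_apply, he1b0, he1b1, he1b2, he2b0, he2b1, he2b2]
    have hs1 : Module.End.IsSemisimple e1 := by
      apply Module.End.isSemisimple_of_squarefree_aeval_eq_zero squarefree_poly2
      have : Polynomial.aeval e1 ((Polynomial.X - Polynomial.C (1:ℝ)) *
          (Polynomial.X - Polynomial.C 2)) = (e1 - 1) * (e1 - 2) := by
        simp [map_mul, map_ofNat]
      rw [this]
      apply b.ext
      intro i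
      fin_cases i <;>
        simp [Module.End.mul_apply, he1b0, he1b1, he1b2, two_smul, smul_sub, sub_smul]
    have hs2 : Module.End.IsSemisimple e2 := by
      apply Module.End.isSemisimple_of_squarefree_aeval_eq_zero squarefree_poly3
      have : Polynomial.aeval e2 ((Polynomial.X : Polynomial ℝ) *
          ((Polynomial.X : Polynomial ℝ) ^ 2 + 1)) = e2 * (e2 ^ 2 + 1) := by
        simp [map_mul]
      rw [this]
      apply b.ext
      intro i
      fin_cases i <;>
        simp [Module.End.mul_apply, pow_two, he2b0, he2b1, he2b2]
    refine ⟨isTorus_span_pair hdere1 hdere2 hcomm12 hs1 hs2, ?_⟩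
    intro t' ht' hle
    refine le_antisymm ?_ hle
    intro f hf
    have he1t : e1 ∈ t' := hle (Submodule.subset_span (Set.mem_insert _ _))
    have he2t : e2 ∈ t' := hle (Submodule.subset_span (Set.mem_insert_of_mem _ rfl))
    have hc1 : f * e1 = e1 * f := ht'.2.1 f hf e1 he1t
    have hc2 : f * e2 = e2 * f := ht'.2.1 f hf e2 he2t
    have hdf : ∀ x y : g, f ⁅x, y⁆ = ⁅f x, y⁆ + ⁅x, f y⁆ := ht'.1 f hf
    have he1x : ∀ x : g, e1 x = b.repr x 0 • b 0 + b.repr x 1 • b 1 +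
        (2 * b.repr x 2) • b 2 := by
      intro x
      rw [he1, happ]
      simp [smul_smul, mul_comm]
    have he2x : ∀ x : g, e2 x = b.repr x 0 • b 1 - b.repr x 1 • b 0 := by
      intro x
      rw [he2, happ]
      simp [smul_neg]
      abel
    -- coefficients of f (b 0)
    have e10 : f (b 0) = e1 (f (b 0)) := by
      have := congrArg (fun h : Module.End ℝ g => h (b 0)) hc1
      simpa [Module.End.mul_apply, he1b0] using this
    have c20 : b.repr (f (b 0)) 2 = 0 := by
      have h0 := e10
      rw [he1x] at h0
      have := congrArg (fun z => b.repr z 2) h0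
      simp [Finsupp.single_apply] at this
      linarith
    have hfb0 : f (b 0) = b.repr (f (b 0)) 0 • b 0 + b.repr (f (b 0)) 1 • b 1 := by
      conv_lhs => rw [hrepr (f (b 0))]
      rw [c20]
      simp
    -- f (b 1) from commuting with e2
    have hfb1 : f (b 1) = b.repr (f (b 0)) 0 • b 1 - b.repr (f (b 0)) 1 • b 0 := by
      have := congrArg (fun h : Module.End ℝ g => h (b 0)) hc2
      simp only [Module.End.mul_apply, he2b0] at this
      rw [this, he2x]
    obtain ⟨a, c, hfb0, hfb1⟩ : ∃ a c : ℝ,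
        f (b 0) = a • b 0 + c • b 1 ∧ f (b 1) = a • b 1 - c • b 0 :=
      ⟨_, _, hfb0, hfb1⟩
    -- f (b 2) from the derivation property
    have hfb2 : f (b 2) = (2 * a) • b 2 := by
      rw [← h12, hdf (b 0) (b 1), hfb0, hfb1]
      simp only [add_lie, lie_add, lie_sub, sub_lie, smul_lie, lie_smul,
        h11, h12, h22, h21]
      simp [two_mul, add_smul, smul_smul]
    apply Submodule.mem_span_pair.mpr
    refine ⟨a, c, ?_⟩
    apply b.ext
    intro i
    fin_cases i <;>
      simp [he1b0, he1b1, he1b2, he2b0, he2b1, he2b2, hfb0, hfb1, hfb2,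
        smul_smul, smul_neg, sub_eq_add_neg, mul_comm]
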